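/- Let F be a linear functional on n×n real matrices with I ∈ argmax_{SO(n)} F. Then the set T := {W skew-symmetric : F(W²) = 0} is a linear subspace of the skew-symmetric matrices. -/

import Mathlib

open Matrix
noncomputable section

def SO (n : ℕ) : Set (Matrix (Fin n) (Fin n) ℝ) :=
  {R | Rᵀ * R = 1 ∧ R.det = 1}

open NormedSpace

section Aux

variable {n : ℕ}

private lemma exp_mem_SO (W : Matrix (Fin n) (Fin n) ℝ) (hW : Wᵀ = -W) (t : ℝ) :
    exp (t • W) ∈ SO n := by
  have hskew : ∀ s : ℝ, (exp (s • W))ᵀ * exp (s • W) = 1 := by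
    intro s
    have h1 : (s • W)ᵀ = -(s • W) := by rw [transpose_smul, hW, smul_neg]
    rw [← Matrix.exp_transpose, h1, ← Matrix.exp_add_of_commute (-(s • W)) (s • W) ((Commute.refl _).neg_left),
      neg_add_cancel, exp_zero]
  have hdetsq : ∀ s : ℝ, (exp (s • W)).det ^ 2 = 1 := by
    intro s
    have := congrArg Matrix.det (hskew s)
    rwa [det_mul, det_transpose, ← sq, det_one] at this
  have hhalf : exp (t • W) = exp ((t / 2) • W) * exp ((t / 2) • W) := by
    rw [← Matrix.exp_add_of_commute _ _ (Commute.refl _), ← add_smul]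
    norm_num
  have hdet_nonneg : 0 ≤ (exp (t • W)).det := by
    rw [hhalf, det_mul, ← sq]
    positivity
  refine ⟨hskew t, ?_⟩
  have h2 := hdetsq t
  have : ((exp (t • W)).det - 1) * ((exp (t • W)).det + 1) = 0 := by ring_nf; linarith
  rcases mul_eq_zero.mp this with h | h
  · linarith
  · linarith

private lemma key (F : Matrix (Fin n) (Fin n) ℝ →ₗ[ℝ] ℝ)
    (hmax : ∀ R ∈ SO n, F R ≤ F 1)
    (W : Matrix (Fin n) (Fin n) ℝ) (hW : Wᵀ = -W) :
    F (W * W) ≤ 0 := by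
  letI : SeminormedRing (Matrix (Fin n) (Fin n) ℝ) := Matrix.linftyOpSemiNormedRing
  letI : NormedRing (Matrix (Fin n) (Fin n) ℝ) := Matrix.linftyOpNormedRing
  letI : NormedAlgebra ℝ (Matrix (Fin n) (Fin n) ℝ) := Matrix.linftyOpNormedAlgebra
  -- F as a continuous linear map
  let Fc : Matrix (Fin n) (Fin n) ℝ →L[ℝ] ℝ := LinearMap.toContinuousLinearMap F
  set g : ℝ → ℝ := fun t => F (exp (t • W)) with hg_def
  set g' : ℝ → ℝ := fun t => F (exp (t • W) * W) with hg'_def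
  have hFc : ∀ A, Fc A = F A := fun A => rfl
  have hg : ∀ t : ℝ, HasDerivAt g (g' t) t := by
    intro t
    exact (Fc.hasFDerivAt.comp_hasDerivAt t (hasDerivAt_exp_smul_const W t))
  have hg'0 : HasDerivAt g' (F (W * W)) 0 := by
    have h1 : HasDerivAt (fun t : ℝ => exp (t • W) * W) (exp ((0 : ℝ) • W) * W * W) 0 :=
      (hasDerivAt_exp_smul_const W (0:ℝ)).mul_const W
    have h2 := Fc.hasFDerivAt.comp_hasDerivAt 0 h1
    simp only [zero_smul, exp_zero, one_mul] at h2
    exact h2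
  have hmaxg : ∀ t : ℝ, g t ≤ g 0 := by
    intro t
    have := hmax _ (exp_mem_SO W hW t)
    simpa [hg_def, zero_smul, exp_zero] using this
  -- first derivative vanishes at the max
  have hloc : IsLocalMax g 0 := Filter.Eventually.of_forall hmaxg
  have hg'zero : g' 0 = 0 := hloc.hasDerivAt_eq_zero (hg 0)
  -- second derivative test, by hand
  by_contra hpos
  push_neg at hpos
  set c := F (W * W) with hc
  -- slope of g' at 0 tends to c > 0, so g' > 0 on a right neighborhood
  have hslope : Filter.Tendsto (slope g' 0) (nhdsWithin 0 {(0:ℝ)}ᶜ) (nhds c) :=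
    hasDerivAt_iff_tendsto_slope.mp hg'0
  have hev : ∀ᶠ t in nhdsWithin (0:ℝ) {(0:ℝ)}ᶜ, c / 2 < slope g' 0 t :=
    hslope.eventually_const_lt (by linarith)
  rw [eventually_nhdsWithin_iff, Metric.eventually_nhds_iff] at hev
  obtain ⟨ε, hε, hball⟩ := hev
  -- g' is positive on (0, ε)
  have hg'pos : ∀ t ∈ Set.Ioo (0:ℝ) ε, 0 < g' t := by
    intro t ht
    have h1 : dist t 0 < ε := by
      rw [Real.dist_eq, sub_zero, abs_of_pos ht.1]; exact ht.2
    have h2 : c / 2 < slope g' 0 t := hball h1 (by simpa using ne_of_gt ht.1)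
    rw [slope_def_field, hg'zero, sub_zero, sub_zero] at h2
    have : 0 < g' t / t := lt_trans (by linarith) h2
    exact (div_pos_iff.mp this).resolve_right (fun h => absurd ht.1 (not_lt.mpr h.2.le)) |>.1
  -- so g is strictly monotone on [0, ε], contradicting the max at 0
  have hcont : ContinuousOn g (Set.Icc 0 ε) := fun t _ => ((hg t).continuousAt).continuousWithinAt
  have hmono : StrictMonoOn g (Set.Icc 0 ε) := by
    apply strictMonoOn_of_deriv_pos (convex_Icc 0 ε) hcont
    intro t ht
    rw [interior_Icc] at ht
    rw [(hg t).deriv]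
    exact hg'pos t ht
  have h1 : g 0 < g (ε / 2) :=
    hmono ⟨le_refl 0, by linarith⟩ ⟨by linarith, by linarith⟩ (by linarith)
  exact absurd (hmaxg (ε / 2)) (not_le.mpr h1)

end Aux

/-- If `I` maximizes `F` over `SO(n)`, then `T = {W skew : F(W²) = 0}` is a linear subspace
of the skew-symmetric matrices: it is closed under linear combinations (and contains `0`). -/
theorem tangent_set_is_subspace (n : ℕ)
    (F : Matrix (Fin n) (Fin n) ℝ →ₗ[ℝ] ℝ)
    (hI : (1 : Matrix (Fin n) (Fin n) ℝ) ∈ SO n)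
    (hmax : ∀ R ∈ SO n, F R ≤ F 1) :
    F ((0 : Matrix (Fin n) (Fin n) ℝ) * 0) = 0 ∧
    ∀ (a b : ℝ) (W₁ W₂ : Matrix (Fin n) (Fin n) ℝ),
      W₁ᵀ = -W₁ → W₂ᵀ = -W₂ → F (W₁ * W₁) = 0 → F (W₂ * W₂) = 0 →
        F ((a • W₁ + b • W₂) * (a • W₁ + b • W₂)) = 0 := by
  constructor
  · simp
  · intro a b W₁ W₂ h₁ h₂ hF₁ hF₂
    -- cross term vanishes
    have hadd : (W₁ + W₂)ᵀ = -(W₁ + W₂) := by rw [transpose_add, h₁, h₂]; abel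
    have hsub : (W₁ - W₂)ᵀ = -(W₁ - W₂) := by rw [transpose_sub, h₁, h₂]; abel
    have k1 := key F hmax (W₁ + W₂) hadd
    have k2 := key F hmax (W₁ - W₂) hsub
    have e1 : (W₁ + W₂) * (W₁ + W₂) = W₁ * W₁ + (W₁ * W₂ + W₂ * W₁) + W₂ * W₂ := by
      noncomm_ring
    have e2 : (W₁ - W₂) * (W₁ - W₂) = W₁ * W₁ - (W₁ * W₂ + W₂ * W₁) + W₂ * W₂ := by
      noncomm_ring
    rw [e1, map_add, map_add, hF₁, hF₂] at k1
    rw [e2, map_add, map_sub, hF₁, hF₂] at k2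
    have hcross : F (W₁ * W₂ + W₂ * W₁) = 0 := by linarith
    have e3 : (a • W₁ + b • W₂) * (a • W₁ + b • W₂) =
        (a * a) • (W₁ * W₁) + (a * b) • (W₁ * W₂ + W₂ * W₁) + (b * b) • (W₂ * W₂) := by
      simp only [add_mul, mul_add, smul_mul_assoc, mul_smul_comm, smul_add, smul_smul]
      abel_nf
      ring_nf
      abel
    rw [e3, map_add, map_add, _root_.map_smul, _root_.map_smul, _root_.map_smul, hF₁, hF₂, hcross]
    simp
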